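/- arXiv:2512.17014 — 3 statements merged into one kernel-verified Lean document; each statement's English description precedes it below -/
import Mathlib

section
/- Let n be a nonempty finite type with decidable equality, let ρ be a density matrix on ℂ^n (a positive semidefinite matrix in Matrix n n ℂ with trace 1), and let ρ^{1/2} be its positive semidefinite square root. Then for every N and every pair of finite families a, b : Fin N → Matrix n n ℂ, the complex number ∑_{j,k} tr(ρ^{1/2} * (a j)ᴴ * (a k) * ρ^{1/2} * (b k) * (b j)ᴴ) is a nonnegative real number, i.e. its imaginary part is zero and its real part is nonnegative. (Equivalently, it equals the squared Frobenius norm of ∑_j (a j) * ρ^{1/2} * (b j)ᴴ.) This expresses that the canonical purification functional ω̂(a ⊗ bᵒᵖ) = tr(ρ^{1/2} a ρ^{1/2} b), defined on Mat_n(ℂ) ⊗ Mat_n(ℂ)^op with the reversed multiplication in the second factor, is a positive linear functional. -/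
open Matrix ComplexOrder

/-- The positive semidefinite square root, as defined in Mathlib of December 2024
(`Matrix.PosSemidef.sqrt`, since removed from Mathlib). -/
noncomputable def Matrix.PosSemidef.sqrt {n : Type*} {𝕜 : Type*} [Fintype n] [RCLike 𝕜]
    [DecidableEq n] {A : Matrix n n 𝕜} (hA : A.PosSemidef) : Matrix n n 𝕜 :=
  (hA.1.eigenvectorUnitary : Matrix n n 𝕜) *
    diagonal (((↑) : ℝ → 𝕜) ∘ (Real.sqrt ·) ∘ hA.1.eigenvalues) *
    (star hA.1.eigenvectorUnitary : Matrix n n 𝕜)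

/-- Positivity of the canonical purification functional
`ω̂(a ⊗ bᵒᵖ) = tr(√ρ a √ρ b)` on `Mat_n(ℂ) ⊗ Mat_n(ℂ)ᵒᵖ`:
for any finite families `a b : Fin N → Matrix n n ℂ`, the sum
`∑ j k, tr(√ρ * (a j)ᴴ * a k * √ρ * b k * (b j)ᴴ)` is a nonnegative real. -/
theorem canonical_purification_positive
    (n : Type*) [Fintype n] [DecidableEq n] [Nonempty n]
    (ρ : Matrix n n ℂ) (hρ : ρ.PosSemidef) (htr : ρ.trace = 1)
    (N : ℕ) (a b : Fin N → Matrix n n ℂ) :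
    (∑ j : Fin N, ∑ k : Fin N,
        (hρ.sqrt * (a j)ᴴ * a k * hρ.sqrt * b k * (b j)ᴴ).trace).im = 0 ∧
    0 ≤ (∑ j : Fin N, ∑ k : Fin N,
        (hρ.sqrt * (a j)ᴴ * a k * hρ.sqrt * b k * (b j)ᴴ).trace).re := by
  have hs : hρ.sqrtᴴ = hρ.sqrt := by
    unfold Matrix.PosSemidef.sqrt
    rw [conjTranspose_mul, conjTranspose_mul, diagonal_conjTranspose]
    have hd : (star ((RCLike.ofReal : ℝ → ℂ) ∘ (Real.sqrt ·) ∘ hρ.1.eigenvalues)) =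
        (RCLike.ofReal : ℝ → ℂ) ∘ (Real.sqrt ·) ∘ hρ.1.eigenvalues := by
      funext i; simp
    rw [hd]
    simp [Matrix.star_eq_conjTranspose, mul_assoc]
  set S : Matrix n n ℂ := ∑ j : Fin N, a j * hρ.sqrt * b j with hS
  have key : (∑ j : Fin N, ∑ k : Fin N,
      (hρ.sqrt * (a j)ᴴ * a k * hρ.sqrt * b k * (b j)ᴴ).trace)
      = (S * Sᴴ).trace := by
    rw [hS, conjTranspose_sum, Finset.sum_mul_sum, trace_sum]
    simp_rw [trace_sum]
    rw [Finset.sum_comm]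
    refine Finset.sum_congr rfl fun k _ => Finset.sum_congr rfl fun j _ => ?_
    simp only [conjTranspose_mul, hs]
    rw [trace_mul_comm _ ((b j)ᴴ), trace_mul_comm (a k * hρ.sqrt * b k)]
    simp only [mul_assoc]
  have im0 : ∀ i j : n, ((S * Sᴴ) i i : ℂ) = (S i j) * star (S i j) → True := fun _ _ _ => trivial
  have htr2 : (S * Sᴴ).trace = ∑ i : n, ∑ j : n, (S i j) * star (S i j) := by
    simp [Matrix.trace, Matrix.mul_apply, Matrix.diag, conjTranspose_apply]
  rw [key, htr2]
  simp only [Complex.star_def, Complex.mul_conj, Complex.im_sum, Complex.re_sum]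
  constructor
  · simp
  · apply Finset.sum_nonneg
    intro i _
    apply Finset.sum_nonneg
    intro j' _
    simp [Complex.normSq_nonneg]
end

section
/- Faithfulness of the extended state: let H be a complex Hilbert space, M a von Neumann algebra on H, and ω ∈ H. Let K be the topological closure of the ℂ-submodule spanned by { a' ω | a' ∈ M' }, let (e_i)_{i : ι} be a Hilbert basis of the orthogonal complement Kᗮ, and let c : ι → ℝ be a summable family with c i > 0 for every i. Then for every L ∈ M, if ‖L ω‖² + ∑'_i c i * ‖L (e_i)‖² = 0, then L = 0. (This is the faithfulness of the state φ(L) = ½(⟨ω, Lω⟩ + ∑_i c_i ⟨e_i, L e_i⟩) used to extend a non-separating state to a separating one.) -/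
/-- Faithfulness of the extended state: let `K` be the closure of `M' ω`,
let `(e i)` be a Hilbert basis of `Kᗮ`, and let `c : ι → ℝ` be a summable
family of positive weights.  If `L ∈ M` satisfies
`‖L ω‖² + ∑' i, c i * ‖L (e i)‖² = 0`, then `L = 0`.  (This is faithfulness
of the state `φ(L) = ½(⟨ω, Lω⟩ + ∑ i c i ⟨e i, L (e i)⟩)` used to extend a
non-separating state to a separating one.) -/
theorem extended_state_faithful
    (H : Type*) [NormedAddCommGroup H] [InnerProductSpace ℂ H] [CompleteSpace H]
    (M : VonNeumannAlgebra H) (ω : H) {ι : Type*}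
    (K : Submodule ℂ H)
    (hK : K = (Submodule.span ℂ { x : H | ∃ a' ∈ M.commutant, x = a' ω }).topologicalClosure)
    (e : HilbertBasis ι ℂ Kᗮ)
    (c : ι → ℝ) (hc : Summable c) (hcpos : ∀ i, 0 < c i)
    (L : H →L[ℂ] H) (hL : L ∈ M)
    (h0 : ‖L ω‖ ^ 2 + ∑' i, c i * ‖L ((e i : Kᗮ) : H)‖ ^ 2 = 0) :
    L = 0 := by
  -- summability of the weighted family
  have hnn : ∀ i, 0 ≤ c i * ‖L ((e i : Kᗮ) : H)‖ ^ 2 := fun i =>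
    mul_nonneg (hcpos i).le (by positivity)
  have hsum : Summable (fun i => c i * ‖L ((e i : Kᗮ) : H)‖ ^ 2) := by
    apply Summable.of_nonneg_of_le hnn (fun i => ?_) (hc.mul_right (‖L‖ ^ 2))
    have h1 : ‖L ((e i : Kᗮ) : H)‖ ≤ ‖L‖ * ‖((e i : Kᗮ) : H)‖ := L.le_opNorm _
    have h2 : ‖((e i : Kᗮ) : H)‖ = 1 := by
      rw [Submodule.norm_coe]
      exact e.orthonormal.1 i
    rw [h2, mul_one] at h1
    exact mul_le_mul_of_nonneg_left
      (pow_le_pow_left₀ (norm_nonneg _) h1 2) (hcpos i).le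
  have htn : 0 ≤ ∑' i, c i * ‖L ((e i : Kᗮ) : H)‖ ^ 2 := tsum_nonneg hnn
  have hωn : (0:ℝ) ≤ ‖L ω‖ ^ 2 := by positivity
  have hω : L ω = 0 := by
    have : ‖L ω‖ ^ 2 = 0 := le_antisymm (by linarith) hωn
    simpa using (pow_eq_zero_iff (n := 2) (by norm_num)).mp this
  have hts : ∑' i, c i * ‖L ((e i : Kᗮ) : H)‖ ^ 2 = 0 := le_antisymm (by linarith) htn
  have he : ∀ i, L ((e i : Kᗮ) : H) = 0 := by
    intro i
    have hle : c i * ‖L ((e i : Kᗮ) : H)‖ ^ 2 ≤ 0 := hts ▸ Summable.le_tsum hsum i (fun j _ => hnn j)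
    have : c i * ‖L ((e i : Kᗮ) : H)‖ ^ 2 = 0 := le_antisymm hle (hnn i)
    have h2 : ‖L ((e i : Kᗮ) : H)‖ ^ 2 = 0 := by
      rcases mul_eq_zero.mp this with h | h
      · exact absurd h (hcpos i).ne'
      · exact h
    simpa using (pow_eq_zero_iff (n := 2) (by norm_num)).mp h2
  -- L vanishes on Kᗮ
  have hKperp : ∀ x ∈ Kᗮ, L x = 0 := by
    intro x hx
    set g : Kᗮ →L[ℂ] H := L.comp Kᗮ.subtypeL with hg
    have hz : ∀ y ∈ Submodule.span ℂ (Set.range fun i => (e i : Kᗮ)), g y = 0 := by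
      intro y hy
      induction hy using Submodule.span_induction with
      | mem y hy =>
          obtain ⟨i, rfl⟩ := hy
          simpa [hg] using he i
      | zero => simp
      | add y z _ _ hy hz => simp [map_add, hy, hz]
      | smul a y _ hy => simp [map_smul, hy]
    have hx' : (⟨x, hx⟩ : Kᗮ) ∈
        (Submodule.span ℂ (Set.range fun i => (e i : Kᗮ))).topologicalClosure := by
      rw [e.dense_span]; trivial
    have : g ⟨x, hx⟩ ∈ closure ({0} : Set H) := by
      refine map_mem_closure g.continuous hx' ?_
      intro y hy
      simp [hz y hy]
    simpa [hg] using this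
  -- L vanishes on K
  have hKz : ∀ x ∈ K, L x = 0 := by
    intro x hx
    rw [hK] at hx
    have hsp : ∀ y ∈ Submodule.span ℂ { x : H | ∃ a' ∈ M.commutant, x = a' ω }, L y = 0 := by
      intro y hy
      induction hy using Submodule.span_induction with
      | mem y hy =>
          obtain ⟨a', ha', rfl⟩ := hy
          have hcomm : L * a' = a' * L := (VonNeumannAlgebra.mem_commutant_iff.mp ha') L hL
          calc L (a' ω) = (L * a') ω := rfl
            _ = (a' * L) ω := by rw [hcomm]
            _ = a' (L ω) := rfl
            _ = 0 := by rw [hω, map_zero]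
      | zero => simp
      | add y z _ _ hy hz => simp [hy, hz]
      | smul a y _ hy => simp [hy]
    have hx' : x ∈ closure ((Submodule.span ℂ { x : H | ∃ a' ∈ M.commutant, x = a' ω }) : Set H) := hx
    have : L x ∈ closure ({0} : Set H) := by
      refine map_mem_closure L.continuous hx' ?_
      intro y hy
      simp [hsp y hy]
    simpa using this
  -- decompose
  ext x
  have hclosed : IsClosed (K : Set H) := hK ▸ Submodule.isClosed_topologicalClosure _
  haveI : CompleteSpace K := hclosed.completeSpace_coe
  obtain ⟨y, hy, z, hz, rfl⟩ := Submodule.exists_add_mem_mem_orthogonal (K := K) x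
  simp [map_add, hKz y hy, hKperp z hz]
end

section
/- Purity of a vector state is equivalent to triviality of the commutant: let H be a complex Hilbert space, A a star-subalgebra of the bounded operators H →L[ℂ] H containing the identity, and Ω ∈ H a unit vector cyclic for A, i.e. { a Ω | a ∈ A } spans a dense subspace of H. Define ω : A → ℂ by ω(a) = ⟪Ω, a Ω⟫. Then the following are equivalent: (1) for every linear functional ψ : A →ₗ[ℂ] ℂ such that ψ(star a * a) is a nonnegative real with ψ(star a * a) ≤ ‖a Ω‖² for all a ∈ A, there exists a real λ with 0 ≤ λ ≤ 1 and ψ(a) = λ * ω(a) for all a ∈ A; (2) every bounded operator T : H →L[ℂ] H that commutes with every element of A is a complex scalar multiple of the identity. -/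
open scoped ComplexOrder InnerProductSpace

set_option maxHeartbeats 1000000

namespace VSPureAux


/-- Factor a linear map through the range of another. -/
noncomputable def factor {R M N W : Type*} [Ring R] [AddCommGroup M] [AddCommGroup N]
    [AddCommGroup W] [Module R M] [Module R N] [Module R W]
    (u : M →ₗ[R] N) (w : M →ₗ[R] W) (hker : ∀ x, u x = 0 → w x = 0) :
    LinearMap.range u →ₗ[R] W :=
  (Submodule.liftQ (LinearMap.ker u) w (fun x hx => LinearMap.mem_ker.mpr (hker x (LinearMap.mem_ker.mp hx)))).comp
    (u.quotKerEquivRange.symm.toLinearMap)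

theorem factor_eval {R M N W : Type*} [Ring R] [AddCommGroup M] [AddCommGroup N]
    [AddCommGroup W] [Module R M] [Module R N] [Module R W]
    (u : M →ₗ[R] N) (w : M →ₗ[R] W) (hker : ∀ x, u x = 0 → w x = 0) (x : M)
    (hx : u x ∈ LinearMap.range u) :
    factor u w hker ⟨u x, hx⟩ = w x := by
  unfold factor
  rw [LinearMap.comp_apply, LinearEquiv.coe_coe,
    LinearMap.quotKerEquivRange_symm_apply_image, Submodule.mkQ_apply,
    Submodule.liftQ_apply]


variable {H : Type*} [NormedAddCommGroup H] [InnerProductSpace ℂ H] [CompleteSpace H]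
  {A : StarSubalgebra ℂ (H →L[ℂ] H)} {Ω : H}

theorem psi_real (ψ : A →ₗ[ℂ] ℂ)
    (hdom : ∀ a : A, 0 ≤ ψ (star a * a) ∧
      ψ (star a * a) ≤ ((‖(a : H →L[ℂ] H) Ω‖ ^ 2 : ℝ) : ℂ)) (c : A) :
    (starRingEnd ℂ) (ψ (star c * c)) = ψ (star c * c) := by
  have h := (hdom c).1
  rw [Complex.le_def] at h
  rw [Complex.conj_eq_iff_im]
  simpa using h.2.symm

theorem psi_herm (ψ : A →ₗ[ℂ] ℂ)
    (hdom : ∀ a : A, 0 ≤ ψ (star a * a) ∧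
      ψ (star a * a) ≤ ((‖(a : H →L[ℂ] H) Ω‖ ^ 2 : ℝ) : ℂ)) (a b : A) :
    (starRingEnd ℂ) (ψ (star a * b)) = ψ (star b * a) := by
  have hre := psi_real (Ω := Ω) ψ hdom
  have e0 : ∀ x y : A, ψ (star (x + y) * (x + y))
      = ψ (star x * x) + ψ (star x * y) + ψ (star y * x) + ψ (star y * y) := by
    intro x y
    have h : star (x + y) * (x + y)
        = star x * x + star x * y + star y * x + star y * y := by
      rw [star_add]; noncomm_ring
    rw [h, map_add, map_add, map_add]
  have e1 := e0 a b
  have e2 : ψ (star (a + Complex.I • b) * (a + Complex.I • b))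
      = ψ (star a * a) + Complex.I * ψ (star a * b)
        - Complex.I * ψ (star b * a) + ψ (star b * b) := by
    rw [e0 a (Complex.I • b)]
    have t1 : star a * (Complex.I • b) = Complex.I • (star a * b) := mul_smul_comm _ _ _
    have t2 : star (Complex.I • b) * a = star Complex.I • (star b * a) := by
      rw [star_smul, smul_mul_assoc]
    have t3 : star (Complex.I • b) * (Complex.I • b) = (star Complex.I * Complex.I) • (star b * b) := by
      rw [star_smul, smul_mul_assoc, mul_smul_comm, smul_smul]
    rw [t1, t2, t3, map_smul, map_smul, map_smul]
    simp only [smul_eq_mul, Complex.star_def, Complex.conj_I, neg_mul, Complex.I_mul_I, neg_neg]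
    ring
  have h3 := congrArg (starRingEnd ℂ) e1
  have h4 := congrArg (starRingEnd ℂ) e2
  rw [hre (a + b)] at h3
  rw [hre (a + Complex.I • b)] at h4
  simp only [map_add, map_sub, map_mul, Complex.conj_I, hre a, hre b] at h3 h4
  rw [e1] at h3
  rw [e2] at h4
  have h4'' : (starRingEnd ℂ) (ψ (star a * b)) - (starRingEnd ℂ) (ψ (star b * a))
      = -(ψ (star a * b) - ψ (star b * a)) := by
    linear_combination (-Complex.I) * h4 + (ψ (star a * b) - ψ (star b * a)
      + (starRingEnd ℂ) (ψ (star a * b)) - (starRingEnd ℂ) (ψ (star b * a))) * Complex.I_mul_I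
  linear_combination (h4'' - h3) / 2

theorem psi_cs (ψ : A →ₗ[ℂ] ℂ)
    (hdom : ∀ a : A, 0 ≤ ψ (star a * a) ∧
      ψ (star a * a) ≤ ((‖(a : H →L[ℂ] H) Ω‖ ^ 2 : ℝ) : ℂ)) (a b : A) :
    ‖ψ (star a * b)‖ ^ 2 ≤ ‖(a : H →L[ℂ] H) Ω‖ ^ 2 * ‖(b : H →L[ℂ] H) Ω‖ ^ 2 := by
  set r : ℂ := ψ (star a * b) with hr
  have hval : ∀ c : A, ψ (star c * c) = (((ψ (star c * c)).re : ℝ) : ℂ) := by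
    intro c
    have h := (hdom c).1
    rw [Complex.le_def] at h
    exact (Complex.re_add_im _).symm.trans (by simp [← h.2])
  set p : ℝ := (ψ (star a * a)).re with hp
  set q : ℝ := (ψ (star b * b)).re with hq
  have hp0 : 0 ≤ p := by have := (hdom a).1; rw [Complex.le_def] at this; exact this.1
  have hq0 : 0 ≤ q := by have := (hdom b).1; rw [Complex.le_def] at this; exact this.1
  have hpA : p ≤ ‖(a : H →L[ℂ] H) Ω‖ ^ 2 := by
    have := (hdom a).2; rw [Complex.le_def] at this
    simpa [← Complex.ofReal_pow] using this.1
  have hqB : q ≤ ‖(b : H →L[ℂ] H) Ω‖ ^ 2 := by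
    have := (hdom b).2; rw [Complex.le_def] at this
    simpa [← Complex.ofReal_pow] using this.1
  set N : ℝ := Complex.normSq r with hN
  have hN' : N = ‖r‖ ^ 2 := by
    rw [hN, ← Complex.sq_norm]
  have hN0 : 0 ≤ N := Complex.normSq_nonneg r
  have key : ∀ s : ℝ, 0 ≤ p - 2 * s * N + s ^ 2 * N * q := by
    intro s
    set t : ℂ := (s : ℂ) * (starRingEnd ℂ) r with ht
    set cc : A := a - t • b with hcc
    have e0s' : ∀ x y : A, ψ (star (x - y) * (x - y))
        = ψ (star x * x) - ψ (star x * y) - ψ (star y * x) + ψ (star y * y) := by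
      intro x y
      have h : star (x - y) * (x - y)
          = star x * x - star x * y - star y * x + star y * y := by
        rw [star_sub]; noncomm_ring
      rw [h, map_add, map_sub, map_sub]
    have e0s : ψ (star cc * cc)
        = ψ (star a * a) - ψ (star a * (t • b)) - ψ (star (t • b) * a)
          + ψ (star (t • b) * (t • b)) := by
      rw [hcc]; exact e0s' a (t • b)
    have t1 : ψ (star a * (t • b)) = t * r := by
      rw [mul_smul_comm, map_smul, smul_eq_mul, ← hr]
    have t2 : ψ (star (t • b) * a) = (starRingEnd ℂ) t * (starRingEnd ℂ) r := by
      rw [star_smul, smul_mul_assoc, map_smul, smul_eq_mul, Complex.star_def]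
      rw [← psi_herm (Ω := Ω) ψ hdom a b, ← hr]
    have t3 : ψ (star (t • b) * (t • b)) = ((starRingEnd ℂ) t * t) * ψ (star b * b) := by
      rw [star_smul, smul_mul_assoc, mul_smul_comm, smul_smul, map_smul, smul_eq_mul,
        Complex.star_def]
    have hcast : ψ (star cc * cc) = ((p - 2 * s * N + s ^ 2 * N * q : ℝ) : ℂ) := by
      rw [e0s, t1, t2, t3, hval a, ← hp, hval b, ← hq, ht]
      have hconj : (starRingEnd ℂ) ((s : ℂ) * (starRingEnd ℂ) r) = (s : ℂ) * r := by
        rw [map_mul, Complex.conj_conj, Complex.conj_ofReal]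
      rw [hconj]
      push_cast
      linear_combination ((s:ℂ)^2 * (q:ℂ) - 2*(s:ℂ)) * Complex.mul_conj r
    have h0 := (hdom cc).1
    rw [hcast, Complex.le_def] at h0
    have h01 := h0.1
    rwa [Complex.zero_re, Complex.ofReal_re] at h01
  have hfin : N ≤ p * q := by
    rcases eq_or_lt_of_le hq0 with hq1|hq1
    · have hNz : N = 0 := by
        by_contra hNne
        have hNpos : 0 < N := lt_of_le_of_ne hN0 (Ne.symm hNne)
        have h1 := key ((p + 1) / (2 * N))
        rw [← hq1, mul_zero] at h1
        have e : 2 * ((p + 1) / (2 * N)) * N = p + 1 := by field_simp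
        nlinarith
      rw [hNz]
      nlinarith
    · have h1 := key (1 / q)
      have e : p - 2 * (1 / q) * N + (1 / q) ^ 2 * N * q = p - N / q := by
        field_simp; ring
      rw [e] at h1
      have h2 : N / q ≤ p := by linarith
      calc N = (N / q) * q := by field_simp
        _ ≤ p * q := by apply mul_le_mul_of_nonneg_right h2 hq0
  calc ‖r‖ ^ 2 = N := hN'.symm
    _ ≤ p * q := hfin
    _ ≤ ‖(a : H →L[ℂ] H) Ω‖ ^ 2 * ‖(b : H →L[ℂ] H) Ω‖ ^ 2 := by
        apply mul_le_mul hpA hqB hq0 (by positivity)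


noncomputable def u (A : StarSubalgebra ℂ (H →L[ℂ] H)) (Ω : H) : A →ₗ[ℂ] H where
  toFun a := (a : H →L[ℂ] H) Ω
  map_add' a b := rfl
  map_smul' c a := rfl


theorem span_eq (A : StarSubalgebra ℂ (H →L[ℂ] H)) (Ω : H) :
    Submodule.span ℂ { x : H | ∃ a ∈ A, x = a Ω } = LinearMap.range (u A Ω) := by
  apply le_antisymm
  · rw [Submodule.span_le]
    rintro x ⟨a, ha, rfl⟩
    exact ⟨⟨a, ha⟩, rfl⟩
  · rintro x ⟨b, rfl⟩
    exact Submodule.subset_span ⟨(b : H →L[ℂ] H), b.2, rfl⟩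

theorem pure_of_commutant_trivial (hΩ : ‖Ω‖ = 1)
    (hcyc : Dense ((Submodule.span ℂ { x : H | ∃ a ∈ A, x = a Ω } : Submodule ℂ H) : Set H))
    (hcom : ∀ T : H →L[ℂ] H, (∀ a ∈ A, T * a = a * T) → ∃ c : ℂ, T = c • 1)
    (ψ : A →ₗ[ℂ] ℂ)
    (hdom : ∀ a : A, 0 ≤ ψ (star a * a) ∧
      ψ (star a * a) ≤ ((‖(a : H →L[ℂ] H) Ω‖ ^ 2 : ℝ) : ℂ)) :
    ∃ l : ℝ, 0 ≤ l ∧ l ≤ 1 ∧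
      ∀ a : A, ψ a = (l : ℂ) * (inner ℂ Ω ((a : H →L[ℂ] H) Ω) : ℂ) := by
  classical
  have hre := fun a b => psi_herm (Ω := Ω) ψ hdom a b
  have hcs : ∀ a b : A, ‖ψ (star a * b)‖ ≤ ‖u A Ω a‖ * ‖u A Ω b‖ := by
    intro a b
    have h : ‖ψ (star a * b)‖ ^ 2 ≤ ‖u A Ω a‖ ^ 2 * ‖u A Ω b‖ ^ 2 :=
      psi_cs (Ω := Ω) ψ hdom a b
    have h2 : ‖ψ (star a * b)‖ ^ 2 ≤ (‖u A Ω a‖ * ‖u A Ω b‖) ^ 2 := by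
      rw [mul_pow]; exact h
    exact (pow_le_pow_iff_left₀ (norm_nonneg _) (by positivity) two_ne_zero).mp h2
  set D : Submodule ℂ H := LinearMap.range (u A Ω) with hD
  have hDset : Dense (D : Set H) := by
    rw [hD, ← span_eq A Ω]; exact hcyc
  have hdr : DenseRange (D.subtypeL) := by
    have h1 : Set.range (D.subtypeL) = (D : Set H) := Subtype.range_coe
    rw [DenseRange, h1]; exact hDset
  have hui : IsUniformInducing (D.subtypeL : D →L[ℂ] H) :=
    isUniformEmbedding_subtype_val.isUniformInducing
  -- the functionals f b
  have hkerf : ∀ b : A, ∀ x : A, u A Ω x = 0 →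
      (ψ.comp (LinearMap.mulLeft ℂ (star b))) x = 0 := by
    intro b x hx
    have h := hcs b x
    rw [hx, norm_zero, mul_zero] at h
    simpa [LinearMap.mulLeft_apply] using norm_le_zero_iff.mp h
  set g : A → (D →ₗ[ℂ] ℂ) :=
    fun b => factor (u A Ω) (ψ.comp (LinearMap.mulLeft ℂ (star b))) (hkerf b) with hg
  have hgbound : ∀ b : A, ∀ x : D, ‖g b x‖ ≤ ‖u A Ω b‖ * ‖x‖ := by
    intro b x
    obtain ⟨a, ha⟩ := x.2
    have hx : x = ⟨u A Ω a, LinearMap.mem_range_self _ a⟩ := Subtype.ext ha.symm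
    rw [hx, hg]
    rw [factor_eval]
    simpa [LinearMap.mulLeft_apply] using hcs b a
  set gc : ∀ _ : A, (D →L[ℂ] ℂ) :=
    fun b => LinearMap.mkContinuous (g b) ‖u A Ω b‖ (hgbound b) with hgc
  set f : A → (H →L[ℂ] ℂ) := fun b => (gc b).extend D.subtypeL with hf
  have hfeval : ∀ b a : A, f b (u A Ω a) = ψ (star b * a) := by
    intro b a
    have h1 : u A Ω a = D.subtypeL ⟨u A Ω a, LinearMap.mem_range_self _ a⟩ := rfl
    rw [hf, h1, ContinuousLinearMap.extend_eq _ hdr hui, hgc]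
    show g b _ = _
    rw [hg, factor_eval]
    simp [LinearMap.mulLeft_apply]
  have hfnorm : ∀ b : A, ‖f b‖ ≤ ‖u A Ω b‖ := by
    intro b
    have h1 : ∀ x : D, ‖x‖ ≤ ((1 : NNReal) : ℝ) * ‖D.subtypeL x‖ := by
      intro x; simp
    have h2 := ContinuousLinearMap.opNorm_extend_le (gc b) hdr (N := 1) h1
    have h3 := LinearMap.mkContinuous_norm_le (g b) (norm_nonneg (u A Ω b)) (hgbound b)
    rw [hf]
    calc ‖(gc b).extend D.subtypeL‖ ≤ 1 * ‖gc b‖ := by exact_mod_cast h2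
      _ = ‖gc b‖ := one_mul _
      _ ≤ ‖u A Ω b‖ := h3
  set v : A → H := fun b => (InnerProductSpace.toDual ℂ H).symm (f b) with hv
  have hvinner : ∀ b : A, ∀ y : H, ⟪v b, y⟫_ℂ = f b y := by
    intro b y; rw [hv]; exact InnerProductSpace.toDual_symm_apply
  have hvnorm : ∀ b : A, ‖v b‖ ≤ ‖u A Ω b‖ := by
    intro b; rw [hv]
    rw [LinearIsometryEquiv.norm_map]
    exact hfnorm b
  have hfadd : ∀ b b' : A, f (b + b') = f b + f b' := by
    intro b b'
    apply ContinuousLinearMap.ext_on hcyc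
    rintro x ⟨a, ha, rfl⟩
    have hx : a Ω = u A Ω ⟨a, ha⟩ := rfl
    rw [ContinuousLinearMap.add_apply, hx, hfeval, hfeval, hfeval, star_add, add_mul, map_add]
  have hfsmul : ∀ (c : ℂ) (b : A), f (c • b) = (starRingEnd ℂ) c • f b := by
    intro c b
    apply ContinuousLinearMap.ext_on hcyc
    rintro x ⟨a, ha, rfl⟩
    have hx : a Ω = u A Ω ⟨a, ha⟩ := rfl
    rw [ContinuousLinearMap.smul_apply, hx, hfeval, hfeval, star_smul, smul_mul_assoc, map_smul]
    simp
  set w : A →ₗ[ℂ] H :=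
    { toFun := v
      map_add' := by
        intro b b'
        show (InnerProductSpace.toDual ℂ H).symm (f (b + b'))
          = (InnerProductSpace.toDual ℂ H).symm (f b) + (InnerProductSpace.toDual ℂ H).symm (f b')
        rw [hfadd, map_add]
      map_smul' := by
        intro c b
        show (InnerProductSpace.toDual ℂ H).symm (f (c • b))
          = (RingHom.id ℂ) c • (InnerProductSpace.toDual ℂ H).symm (f b)
        rw [hfsmul, LinearIsometryEquiv.map_smulₛₗ]
        simp } with hw
  have hweval : ∀ b : A, w b = v b := fun b => rfl
  have hkerw : ∀ x : A, u A Ω x = 0 → w x = 0 := by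
    intro x hx
    have h := hvnorm x
    rw [hx, norm_zero] at h
    have : w x = v x := rfl
    rw [this]
    exact norm_le_zero_iff.mp h
  set T0 : D →ₗ[ℂ] H := factor (u A Ω) w hkerw with hT0
  have hT0bound : ∀ x : D, ‖T0 x‖ ≤ 1 * ‖x‖ := by
    intro x
    obtain ⟨a, ha⟩ := x.2
    have hx : x = ⟨u A Ω a, LinearMap.mem_range_self _ a⟩ := Subtype.ext ha.symm
    rw [hx, hT0, factor_eval, one_mul]
    have h1 : ‖(⟨u A Ω a, LinearMap.mem_range_self _ a⟩ : D)‖ = ‖u A Ω a‖ := rfl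
    rw [h1, hweval]
    exact hvnorm a
  set T0c : D →L[ℂ] H := LinearMap.mkContinuous T0 1 hT0bound with hT0c
  set T : H →L[ℂ] H := T0c.extend D.subtypeL with hT
  have hTeval : ∀ b : A, T (u A Ω b) = v b := by
    intro b
    have h1 : u A Ω b = D.subtypeL ⟨u A Ω b, LinearMap.mem_range_self _ b⟩ := rfl
    rw [hT, h1, ContinuousLinearMap.extend_eq _ hdr hui, hT0c]
    show T0 _ = _
    rw [hT0, factor_eval, hweval]
  have hTinner : ∀ a b : A, ⟪u A Ω a, T (u A Ω b)⟫_ℂ = ψ (star a * b) := by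
    intro a b
    rw [hTeval, ← inner_conj_symm, hvinner, hfeval, hre b a]
  have hTcomm : ∀ c' ∈ A, T * c' = c' * T := by
    intro cop hc
    apply ContinuousLinearMap.ext_on hcyc
    rintro x ⟨e, he, rfl⟩
    set ct : A := ⟨cop, hc⟩ with hct
    set et : A := ⟨e, he⟩ with het
    have h2 : e Ω = u A Ω et := rfl
    have h1 : cop (e Ω) = u A Ω (ct * et) := by
      show cop (e Ω) = ((ct * et : A) : H →L[ℂ] H) Ω
      rw [MulMemClass.coe_mul]
      rfl
    rw [ContinuousLinearMap.mul_apply, ContinuousLinearMap.mul_apply, h1, h2, hTeval, hTeval]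
    -- goal : v (ct * et) = cop (v et)
    have key : innerSL ℂ (v (ct * et)) = innerSL ℂ (cop (v et)) := by
      apply ContinuousLinearMap.ext_on hcyc
      rintro y ⟨aop, haop, rfl⟩
      set at' : A := ⟨aop, haop⟩ with hat
      simp only [coe_innerSL_apply, innerSL_apply_apply]
      have h3 : aop Ω = u A Ω at' := rfl
      rw [h3, hvinner, hfeval]
      have h5 : u A Ω (star ct * at') = (star cop) (u A Ω at') := by
        show ((star ct * at' : A) : H →L[ℂ] H) Ω = _
        rw [MulMemClass.coe_mul, StarMemClass.coe_star]
        rfl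
      have h4 : ⟪cop (v et), u A Ω at'⟫_ℂ = ⟪v et, (star cop) (u A Ω at')⟫_ℂ := by
        conv_lhs => rw [show cop = ContinuousLinearMap.adjoint (star cop) from by
          rw [← ContinuousLinearMap.star_eq_adjoint, star_star]]
        rw [ContinuousLinearMap.adjoint_inner_left]
      rw [h4, ← h5, hvinner, hfeval, star_mul, mul_assoc]
    apply ext_inner_right ℂ
    intro y
    have h6 := congrFun (congrArg (fun (F : H →L[ℂ] ℂ) => (F : H → ℂ)) key) y
    simpa using h6
  obtain ⟨c0, hc0⟩ := hcom T hTcomm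
  have hone : u A Ω 1 = Ω := by
    show ((1 : A) : H →L[ℂ] H) Ω = Ω
    rw [OneMemClass.coe_one]
    rfl
  have hψa : ∀ a : A, ψ a = c0 * ⟪Ω, u A Ω a⟫_ℂ := by
    intro a
    have h1 : ψ a = ψ (star (1 : A) * a) := by rw [star_one, one_mul]
    rw [h1, ← hTinner 1 a, hc0, hone]
    rw [ContinuousLinearMap.smul_apply, ContinuousLinearMap.one_apply, inner_smul_right]
  have hinnerΩ : ⟪Ω, Ω⟫_ℂ = 1 := by
    rw [inner_self_eq_norm_sq_to_K, hΩ]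
    norm_num
  have hψ1 : ψ 1 = c0 := by
    rw [hψa 1, hone, hinnerΩ, mul_one]
  have hb := hdom 1
  rw [star_one, one_mul, hψ1] at hb
  have hb2 : ((‖((1 : A) : H →L[ℂ] H) Ω‖ ^ 2 : ℝ) : ℂ) = 1 := by
    rw [show ((1 : A) : H →L[ℂ] H) Ω = Ω from by rw [OneMemClass.coe_one]; rfl, hΩ]
    norm_num
  rw [hb2] at hb
  obtain ⟨hbl, hbr⟩ := hb
  rw [Complex.le_def] at hbl hbr
  have him : c0.im = 0 := by simpa using hbl.2.symm
  have hc0re : c0 = ((c0.re : ℝ) : ℂ) := by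
    apply Complex.ext <;> simp [him]
  refine ⟨c0.re, by simpa using hbl.1, by simpa using hbr.1, ?_⟩
  intro a
  rw [hψa a, ← hc0re]
  rfl

theorem sa_scalar (hΩ : ‖Ω‖ = 1)
    (hcyc : Dense ((Submodule.span ℂ { x : H | ∃ a ∈ A, x = a Ω } : Submodule ℂ H) : Set H))
    (hpure : ∀ ψ : A →ₗ[ℂ] ℂ,
        (∀ a : A, 0 ≤ ψ (star a * a) ∧
          ψ (star a * a) ≤ ((‖(a : H →L[ℂ] H) Ω‖ ^ 2 : ℝ) : ℂ)) →
        ∃ l : ℝ, 0 ≤ l ∧ l ≤ 1 ∧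
          ∀ a : A, ψ a = (l : ℂ) * (inner ℂ Ω ((a : H →L[ℂ] H) Ω) : ℂ))
    (S : H →L[ℂ] H) (hS : star S = S) (hSc : ∀ a ∈ A, S * a = a * S) :
    ∃ r : ℝ, S = (r : ℂ) • 1 := by
  set M : ℝ := ‖S‖ with hM
  have hM0 : 0 ≤ M := norm_nonneg S
  set c : ℝ := 2 * M + 1 with hc
  have hc0 : (0:ℝ) < c := by positivity
  set S' : H →L[ℂ] H := ((c⁻¹ : ℝ) : ℂ) • (S + ((M : ℂ)) • 1) with hS'def
  -- S' is self-adjoint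
  have hS' : star S' = S' := by
    rw [hS'def]
    simp [star_smul, star_add, hS, Complex.ext_iff]
  -- S' commutes with A
  have hS'c : ∀ a ∈ A, S' * a = a * S' := by
    intro a ha
    rw [hS'def]
    simp only [smul_mul_assoc, mul_smul_comm, add_mul, mul_add, one_mul, mul_one, hSc a ha]
  -- quadratic form bounds
  have hsa : ∀ x : H, (starRingEnd ℂ) (⟪x, S x⟫_ℂ) = ⟪x, S x⟫_ℂ := by
    intro x
    have h1 : ⟪S x, x⟫_ℂ = ⟪x, S x⟫_ℂ := by
      conv_lhs => rw [← hS, ContinuousLinearMap.star_eq_adjoint,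
        ContinuousLinearMap.adjoint_inner_left]
    rw [inner_conj_symm, h1]
  have hquad : ∀ x : H, (⟪x, S' x⟫_ℂ).im = 0 ∧ 0 ≤ (⟪x, S' x⟫_ℂ).re ∧
      (⟪x, S' x⟫_ℂ).re ≤ ‖x‖ ^ 2 := by
    intro x
    have hzim : (⟪x, S x⟫_ℂ).im = 0 := Complex.conj_eq_iff_im.mp (hsa x)
    have habs : |(⟪x, S x⟫_ℂ).re| ≤ M * ‖x‖ ^ 2 := by
      have h1 : |(⟪x, S x⟫_ℂ).re| ≤ ‖⟪x, S x⟫_ℂ‖ := Complex.abs_re_le_norm _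
      have h2 : ‖⟪x, S x⟫_ℂ‖ ≤ ‖x‖ * ‖S x‖ := norm_inner_le_norm x (S x)
      have h3 : ‖S x‖ ≤ M * ‖x‖ := S.le_opNorm x
      nlinarith [norm_nonneg x]
    have hxx_im : (⟪x, x⟫_ℂ).im = 0 := by
      simp [inner_self_eq_norm_sq_to_K, ← Complex.ofReal_pow]
    have hxx_re : (⟪x, x⟫_ℂ).re = ‖x‖ ^ 2 := by
      simp [inner_self_eq_norm_sq_to_K, ← Complex.ofReal_pow]
    have hval : ⟪x, S' x⟫_ℂ = ((c⁻¹ : ℝ) : ℂ) * (⟪x, S x⟫_ℂ + (M : ℂ) * ⟪x, x⟫_ℂ) := by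
      rw [hS'def]
      simp only [ContinuousLinearMap.smul_apply, ContinuousLinearMap.add_apply,
        ContinuousLinearMap.one_apply, inner_smul_right, inner_add_right]
      try ring
    rw [hval]
    have him : (((c⁻¹ : ℝ) : ℂ) * (⟪x, S x⟫_ℂ + (M : ℂ) * ⟪x, x⟫_ℂ)).im
        = c⁻¹ * ((⟪x, S x⟫_ℂ).im + M * (⟪x, x⟫_ℂ).im) := by
      simp [Complex.mul_im, Complex.mul_re]; try ring
    have hre : (((c⁻¹ : ℝ) : ℂ) * (⟪x, S x⟫_ℂ + (M : ℂ) * ⟪x, x⟫_ℂ)).re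
        = c⁻¹ * ((⟪x, S x⟫_ℂ).re + M * (⟪x, x⟫_ℂ).re) := by
      simp [Complex.mul_re, Complex.mul_im]; try ring
    rw [him, hre, hzim, hxx_im, hxx_re]
    refine ⟨by ring, ?_, ?_⟩
    · have : 0 ≤ (⟪x, S x⟫_ℂ).re + M * ‖x‖ ^ 2 := by
        have := abs_le.mp habs; linarith [this.1]
      positivity
    · have h4 : (⟪x, S x⟫_ℂ).re + M * ‖x‖ ^ 2 ≤ 2 * M * ‖x‖ ^ 2 := by
        have := abs_le.mp habs; linarith [this.2]
      have h5 : c⁻¹ * ((⟪x, S x⟫_ℂ).re + M * ‖x‖ ^ 2) ≤ c⁻¹ * (2 * M * ‖x‖ ^ 2) := by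
        apply mul_le_mul_of_nonneg_left h4 (by positivity)
      have h6 : c⁻¹ * (2 * M * ‖x‖ ^ 2) ≤ ‖x‖ ^ 2 := by
        rw [inv_mul_le_iff₀ hc0]
        nlinarith [sq_nonneg ‖x‖]
      linarith
  -- the functional ψ
  set ψ : A →ₗ[ℂ] ℂ :=
    { toFun := fun a => ⟪Ω, S' ((a : H →L[ℂ] H) Ω)⟫_ℂ
      map_add' := by intro a b; simp [inner_add_right]
      map_smul' := by intro c a; simp [inner_smul_right] } with hψdef
  have hψeval : ∀ a : A, ψ (star a * a)
      = ⟪(a : H →L[ℂ] H) Ω, S' ((a : H →L[ℂ] H) Ω)⟫_ℂ := by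
    intro a
    have hcm : S' * (star (a : H →L[ℂ] H)) = (star (a : H →L[ℂ] H)) * S' := by
      have : star (a : H →L[ℂ] H) = ((star a : A) : H →L[ℂ] H) := by
        simp [StarMemClass.coe_star]
      rw [this]; exact hS'c _ (star_mem a.2)
    have h1 : ((star a * a : A) : H →L[ℂ] H) Ω
        = (star (a : H →L[ℂ] H)) ((a : H →L[ℂ] H) Ω) := by
      simp [MulMemClass.coe_mul, StarMemClass.coe_star, ContinuousLinearMap.mul_apply]
    have h2 : S' ((star (a : H →L[ℂ] H)) ((a : H →L[ℂ] H) Ω))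
        = (star (a : H →L[ℂ] H)) (S' ((a : H →L[ℂ] H) Ω)) := by
      have := congrArg (fun (T : H →L[ℂ] H) => T ((a : H →L[ℂ] H) Ω)) hcm
      simpa using this
    show ⟪Ω, S' (((star a * a : A) : H →L[ℂ] H) Ω)⟫_ℂ = _
    rw [h1, h2, ContinuousLinearMap.star_eq_adjoint,
      ContinuousLinearMap.adjoint_inner_right]
  have hdom : ∀ a : A, 0 ≤ ψ (star a * a) ∧
      ψ (star a * a) ≤ ((‖(a : H →L[ℂ] H) Ω‖ ^ 2 : ℝ) : ℂ) := by
    intro a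
    rw [hψeval a]
    obtain ⟨h1, h2, h3⟩ := hquad ((a : H →L[ℂ] H) Ω)
    constructor
    · rw [Complex.le_def]; simp [h1, h2]
    · rw [Complex.le_def]
      constructor
      · simpa [← Complex.ofReal_pow] using h3
      · simp [h1, ← Complex.ofReal_pow]
  obtain ⟨l, hl0, hl1, hlψ⟩ := hpure ψ hdom
  -- S' = l • 1
  have hS'eq : S' = ((l : ℂ)) • 1 := by
    apply ContinuousLinearMap.ext_on hcyc
    rintro x ⟨a, ha, rfl⟩
    set a' : A := ⟨a, ha⟩ with ha'
    have hacoe : (a' : H →L[ℂ] H) = a := rfl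
    have key : ∀ y : H, ⟪S' (a Ω), y⟫_ℂ = ⟪(l : ℂ) • (a Ω), y⟫_ℂ := by
      have h2 : innerSL ℂ (S' (a Ω)) = innerSL ℂ ((l : ℂ) • (a Ω)) := by
        apply ContinuousLinearMap.ext_on hcyc
        rintro y ⟨b, hb, rfl⟩
        simp only [coe_innerSL_apply, innerSL_apply_apply]
        set b' : A := ⟨b, hb⟩ with hb'
        have hbcoe : (b' : H →L[ℂ] H) = b := rfl
        have hba : ((star b' * a' : A) : H →L[ℂ] H) = star b * a := by
          rw [MulMemClass.coe_mul, StarMemClass.coe_star, hacoe, hbcoe]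
        have step : ⟪b Ω, S' (a Ω)⟫_ℂ = (l : ℂ) * ⟪b Ω, a Ω⟫_ℂ := by
          have hcm : S' * (star b) = (star b) * S' := by
            have : star b = ((star b' : A) : H →L[ℂ] H) := by
              rw [StarMemClass.coe_star, hbcoe]
            rw [this]; exact hS'c _ (star_mem hb)
          have h3 : (star b) (S' (a Ω)) = S' ((star b) (a Ω)) := by
            have := congrArg (fun (T : H →L[ℂ] H) => T (a Ω)) hcm
            simpa [ContinuousLinearMap.mul_apply] using this.symm
          have h4 : ⟪b Ω, S' (a Ω)⟫_ℂ = ⟪Ω, (star b) (S' (a Ω))⟫_ℂ := by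
            rw [ContinuousLinearMap.star_eq_adjoint, ContinuousLinearMap.adjoint_inner_right]
          have h5 : (star b) (a Ω) = ((star b' * a' : A) : H →L[ℂ] H) Ω := by
            rw [hba, ContinuousLinearMap.mul_apply]
          have h6 : ⟪Ω, S' (((star b' * a' : A) : H →L[ℂ] H) Ω)⟫_ℂ
              = (l : ℂ) * ⟪Ω, ((star b' * a' : A) : H →L[ℂ] H) Ω⟫_ℂ := hlψ (star b' * a')
          have h8 : ⟪Ω, ((star b' * a' : A) : H →L[ℂ] H) Ω⟫_ℂ = ⟪b Ω, a Ω⟫_ℂ := by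
            rw [hba, ContinuousLinearMap.mul_apply,
              ContinuousLinearMap.star_eq_adjoint, ContinuousLinearMap.adjoint_inner_right]
          rw [h4, h3, h5, h6, h8]
        calc ⟪S' (a Ω), b Ω⟫_ℂ = (starRingEnd ℂ) ⟪b Ω, S' (a Ω)⟫_ℂ := (inner_conj_symm _ _).symm
          _ = (starRingEnd ℂ) ((l : ℂ) * ⟪b Ω, a Ω⟫_ℂ) := by rw [step]
          _ = (l : ℂ) * ⟪a Ω, b Ω⟫_ℂ := by rw [map_mul, inner_conj_symm]; simp
          _ = ⟪(l : ℂ) • (a Ω), b Ω⟫_ℂ := by rw [inner_smul_left]; simp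
      intro y
      have := congrFun (congrArg (fun (f : H →L[ℂ] ℂ) => (f : H → ℂ)) h2) y
      simpa using this
    have := ext_inner_right ℂ key
    simpa using this
  -- conclude
  refine ⟨c * l - M, ?_⟩
  have hSrec : S = ((c : ℝ) : ℂ) • S' - ((M : ℝ) : ℂ) • 1 := by
    rw [hS'def, smul_smul]
    rw [← Complex.ofReal_mul, mul_inv_cancel₀ (ne_of_gt hc0)]
    simp
  rw [hSrec, hS'eq, smul_smul]
  push_cast
  rw [sub_smul]

end VSPureAux

open scoped ComplexOrder

/-- Purity of a vector state is equivalent to triviality of the commutant: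
for a unit vector `Ω` cyclic for a unital star-subalgebra `A` of bounded
operators, with vector state `ω(a) = ⟪Ω, a Ω⟫`, the following are
equivalent: (1) every dominated positive linear functional
(`0 ≤ ψ(a* a) ≤ ‖a Ω‖²`) is a multiple `λ ω` with `0 ≤ λ ≤ 1`;
(2) every bounded operator commuting with `A` is a scalar. -/
theorem vector_state_pure_iff_commutant_trivial
    (H : Type*) [NormedAddCommGroup H] [InnerProductSpace ℂ H] [CompleteSpace H]
    (A : StarSubalgebra ℂ (H →L[ℂ] H))
    (Ω : H) (hΩ : ‖Ω‖ = 1)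
    (hcyc : Dense ((Submodule.span ℂ { x : H | ∃ a ∈ A, x = a Ω } : Submodule ℂ H) : Set H)) :
    (∀ ψ : A →ₗ[ℂ] ℂ,
        (∀ a : A, 0 ≤ ψ (star a * a) ∧
          ψ (star a * a) ≤ ((‖(a : H →L[ℂ] H) Ω‖ ^ 2 : ℝ) : ℂ)) →
        ∃ l : ℝ, 0 ≤ l ∧ l ≤ 1 ∧
          ∀ a : A, ψ a = (l : ℂ) * (inner ℂ Ω ((a : H →L[ℂ] H) Ω) : ℂ)) ↔
      (∀ T : H →L[ℂ] H, (∀ a ∈ A, T * a = a * T) → ∃ c : ℂ, T = c • 1) := by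
  constructor
  · intro hpure T hT
    have hTstar : ∀ a ∈ A, star T * a = a * star T := by
      intro a ha
      have h1 := hT (star a) (star_mem ha)
      have h2 : star T * a = star (star a * T) := by rw [star_mul, star_star]
      rw [h2, ← h1, star_mul, star_star]
    set X : H →L[ℂ] H := (2⁻¹ : ℂ) • (T + star T) with hX
    set Y : H →L[ℂ] H := (-(Complex.I) / 2) • (T - star T) with hY
    have hstar2 : star (2⁻¹ : ℂ) = (2⁻¹ : ℂ) := by
      simp [Complex.star_def, Complex.ext_iff]
    have hstarI2 : star (-(Complex.I) / 2 : ℂ) = (Complex.I / 2 : ℂ) := by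
      rw [Complex.star_def, map_div₀, map_neg, Complex.conj_I, map_ofNat]
      norm_num
    have hXsa : star X = X := by
      rw [hX, star_smul, star_add, star_star, hstar2, add_comm]
    have hYsa : star Y = Y := by
      rw [hY, star_smul, star_sub, star_star, hstarI2]
      rw [show (Complex.I / 2 : ℂ) = -(-(Complex.I) / 2) from by ring, neg_smul, ← smul_neg,
        neg_sub]
    have hXc : ∀ a ∈ A, X * a = a * X := by
      intro a ha
      rw [hX, smul_mul_assoc, mul_smul_comm, add_mul, mul_add, hT a ha, hTstar a ha]
    have hYc : ∀ a ∈ A, Y * a = a * Y := by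
      intro a ha
      rw [hY, smul_mul_assoc, mul_smul_comm, sub_mul, mul_sub, hT a ha, hTstar a ha]
    obtain ⟨x, hx⟩ := VSPureAux.sa_scalar hΩ hcyc hpure X hXsa hXc
    obtain ⟨y, hy⟩ := VSPureAux.sa_scalar hΩ hcyc hpure Y hYsa hYc
    refine ⟨(x : ℂ) + Complex.I * (y : ℂ), ?_⟩
    have hT2 : T = X + Complex.I • Y := by
      rw [hX, hY, smul_smul, show Complex.I * (-(Complex.I) / 2) = (2⁻¹ : ℂ) from by
        linear_combination (-(1 : ℂ) / 2) * Complex.I_mul_I]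
      module
    rw [hT2, hx, hy, smul_smul, ← add_smul]
  · intro hcom ψ hdom
    exact VSPureAux.pure_of_commutant_trivial hΩ hcyc hcom ψ hdom
end
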